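/- Let r, p be nonnegative integers, G a finite graph, A a subset of V(G), and S an (r,p)-guarding set for A. Suppose f : ℕ × ℕ → ℕ is non-decreasing in the second argument and for every subset A' of V(G) the number of distinct r-profiles with respect to A' (excluding the all-∞ profile) is at most f(r,|A'|). Then the number of distinct r-profiles with respect to A (excluding the all-∞ profile) is at most f(r,p)·|S|. -/

import Mathlib

open SimpleGraph

noncomputable def rProfile {V : Type*} (G : SimpleGraph V) (r : ℕ) (A : Set V) (v : V) :
    A → ℕ∞ :=
  fun a => if G.edist v a ≤ r then G.edist v a else ⊤

/-- The number of distinct `r`-profiles with respect to `A`, excluding the all-`∞` profile. -/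
noncomputable def profCount {V : Type*} (G : SimpleGraph V) (r : ℕ) (A : Set V) : ℕ :=
  ({p | ∃ v : V, p = rProfile G r A v} \ {fun _ => ⊤}).ncard

/-- A family `𝒮` of subsets of `V(G)` is an `(r,p)`-guarding set for `A` if every member
has size at most `p` and for every vertex `v` there is a member of `𝒮` meeting every
path of length at most `r` from `v` to a vertex of `A`. -/
def IsGuarding {V : Type*} (G : SimpleGraph V) (r p : ℕ) (A : Set V)
    (𝒮 : Set (Set V)) : Prop :=
  (∀ S ∈ 𝒮, S.ncard ≤ p) ∧
  ∀ v : V, ∃ S ∈ 𝒮, ∀ a ∈ A, ∀ w : G.Walk v a, w.IsPath → w.length ≤ r →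
    ∃ x ∈ S, x ∈ w.support

section aux

variable {V : Type*} (G : SimpleGraph V) (r : ℕ) (A S : Set V)

/-- reconstruction of the `A`-profile from the `S`-profile -/
noncomputable def recon (q : S → ℕ∞) : A → ℕ∞ :=
  fun a => if (⨅ x : S, q x + G.edist x a) ≤ r then (⨅ x : S, q x + G.edist x a) else ⊤

lemma rProfile_ge (v : V) (x : S) : G.edist v x ≤ rProfile G r S v x := by
  unfold rProfile
  split <;> simp

lemma key {v : V}
    (hg : ∀ a ∈ A, ∀ w : G.Walk v a, w.IsPath → w.length ≤ r → ∃ x ∈ S, x ∈ w.support) :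
    rProfile G r A v = recon G r A S (rProfile G r S v) := by
  classical
  funext a
  have hlow : G.edist v a ≤ ⨅ x : S, rProfile G r S v x + G.edist x a := by
    refine le_iInf fun x => le_trans (G.edist_triangle (v := x)) ?_
    exact add_le_add_left (rProfile_ge G r S v x) _
  by_cases h : G.edist v a ≤ r
  · -- find x ∈ S on a shortest path
    have hne : G.edist v a ≠ ⊤ := fun ht => by simp [ht] at h
    obtain ⟨w, hw⟩ := G.exists_walk_of_edist_ne_top hne
    have hlen : (w.bypass.length : ℕ∞) ≤ r := by
      calc (w.bypass.length : ℕ∞) ≤ (w.length : ℕ∞) := by exact_mod_cast w.length_bypass_le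
        _ = G.edist v a := hw
        _ ≤ r := h
    obtain ⟨x, hxS, hxsup⟩ := hg a a.2 w.bypass w.bypass_isPath (by exact_mod_cast hlen)
    have h1 : G.edist v x ≤ ((w.bypass.takeUntil x hxsup).length : ℕ∞) :=
      SimpleGraph.edist_le _
    have h2 : G.edist x a ≤ ((w.bypass.dropUntil x hxsup).length : ℕ∞) :=
      SimpleGraph.edist_le _
    have hsum : (w.bypass.takeUntil x hxsup).length + (w.bypass.dropUntil x hxsup).length
        = w.bypass.length := by
      have := congr_arg SimpleGraph.Walk.length (w.bypass.take_spec hxsup)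
      rwa [SimpleGraph.Walk.length_append] at this
    have hvx : G.edist v x ≤ r := by
      refine le_trans h1 (le_trans ?_ hlen)
      exact_mod_cast w.bypass.length_takeUntil_le hxsup
    have hq : rProfile G r S v ⟨x, hxS⟩ = G.edist v x := by
      unfold rProfile; simp [hvx]
    have hup : (⨅ x : S, rProfile G r S v x + G.edist x a) ≤ G.edist v a := by
      refine le_trans (iInf_le _ ⟨x, hxS⟩) ?_
      rw [hq]
      calc G.edist v x + G.edist x a
          ≤ ((w.bypass.takeUntil x hxsup).length : ℕ∞)
            + ((w.bypass.dropUntil x hxsup).length : ℕ∞) := add_le_add h1 h2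
        _ = (w.bypass.length : ℕ∞) := by exact_mod_cast hsum
        _ ≤ (w.length : ℕ∞) := by exact_mod_cast w.length_bypass_le
        _ = G.edist v a := hw
    have heq : (⨅ x : S, rProfile G r S v x + G.edist x a) = G.edist v a :=
      le_antisymm hup hlow
    unfold recon
    rw [heq]
    simp [rProfile, h]
  · have h2 : ¬ (⨅ x : S, rProfile G r S v x + G.edist x a) ≤ r :=
      fun hle => h (le_trans hlow hle)
    unfold recon
    rw [if_neg h2]
    simp [rProfile, h]

lemma key_ne_top {v : V}
    (hg : ∀ a ∈ A, ∀ w : G.Walk v a, w.IsPath → w.length ≤ r → ∃ x ∈ S, x ∈ w.support)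
    (hne : rProfile G r A v ≠ (fun _ => ⊤)) :
    rProfile G r S v ≠ (fun _ => ⊤) := by
  classical
  have : ∃ a : A, G.edist v a ≤ r := by
    by_contra hc
    push_neg at hc
    exact hne (funext fun a => by unfold rProfile; simp [(hc a).not_ge])
  obtain ⟨a, h⟩ := this
  have hne' : G.edist v a ≠ ⊤ := fun ht => by simp [ht] at h
  obtain ⟨w, hw⟩ := G.exists_walk_of_edist_ne_top hne'
  have hlen : (w.bypass.length : ℕ∞) ≤ r := by
    calc (w.bypass.length : ℕ∞) ≤ (w.length : ℕ∞) := by exact_mod_cast w.length_bypass_le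
      _ = G.edist v a := hw
      _ ≤ r := h
  obtain ⟨x, hxS, hxsup⟩ := hg a a.2 w.bypass w.bypass_isPath (by exact_mod_cast hlen)
  have hvx : G.edist v x ≤ r := by
    refine le_trans (SimpleGraph.edist_le (w.bypass.takeUntil x hxsup)) (le_trans ?_ hlen)
    exact_mod_cast w.bypass.length_takeUntil_le hxsup
  intro hcon
  have : rProfile G r S v ⟨x, hxS⟩ = (⊤ : ℕ∞) := by rw [hcon]
  unfold rProfile at this
  rw [if_pos hvx] at this
  exact (lt_of_le_of_lt hvx (by simp : (r : ℕ∞) < ⊤)).ne this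

lemma aux_ncard_biUnion_le {α β : Type*} (F : α → Set β) (hF : ∀ a, (F a).Finite)
    (t : Finset α) : (⋃ a ∈ t, F a).ncard ≤ ∑ a ∈ t, (F a).ncard := by
  classical
  induction t using Finset.induction_on with
  | empty => simp
  | @insert b s hb ih =>
    rw [Finset.set_biUnion_insert, Finset.sum_insert hb]
    exact le_trans (Set.ncard_union_le _ _) (add_le_add_right ih _)

end aux


/-- Joret–Rambaud, Lemma 12: if `𝒮` is an `(r,p)`-guarding set for `A` and
`pc_r(G,A') ≤ f(r,|A'|)` for all `A'`, with `f` non-decreasing in its second argument,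
then `pc_r(G,A) ≤ f(r,p)·|𝒮|`. -/
theorem profCount_le_of_guarding {V : Type*} [Fintype V] (G : SimpleGraph V)
    (r p : ℕ) (A : Set V) (𝒮 : Set (Set V)) (hguard : IsGuarding G r p A 𝒮)
    (f : ℕ × ℕ → ℕ) (hf : ∀ s k k', k ≤ k' → f (s, k) ≤ f (s, k'))
    (hbound : ∀ A' : Set V, profCount G r A' ≤ f (r, A'.ncard)) :
    profCount G r A ≤ f (r, p) * 𝒮.ncard := by
  classical
  have h𝒮 : 𝒮.Finite := Set.toFinite _
  set F : Set V → Set (A → ℕ∞) := fun S =>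
    recon G r A S '' (({q | ∃ v : V, q = rProfile G r S v} \ {fun _ => ⊤})) with hFdef
  have hfin : ∀ S : Set V, (F S).Finite := by
    intro S
    refine Set.Finite.image _ (Set.Finite.subset (Set.finite_range (rProfile G r S)) ?_)
    rintro q ⟨⟨v, hv⟩, -⟩
    exact ⟨v, hv.symm⟩
  have hsub : ({p | ∃ v : V, p = rProfile G r A v} \ {fun _ => ⊤})
      ⊆ ⋃ S ∈ h𝒮.toFinset, F S := by
    rintro q ⟨⟨v, hv⟩, hq⟩
    obtain ⟨S, hS𝒮, hgv⟩ := hguard.2 v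
    refine Set.mem_iUnion₂.2 ⟨S, h𝒮.mem_toFinset.2 hS𝒮, ?_⟩
    refine ⟨rProfile G r S v, ⟨⟨v, rfl⟩, ?_⟩, ?_⟩
    · exact key_ne_top G r A S hgv (hv ▸ hq)
    · rw [hv]; exact (key G r A S hgv).symm
  calc profCount G r A ≤ (⋃ S ∈ h𝒮.toFinset, F S).ncard := by
        refine Set.ncard_le_ncard hsub ?_
        exact Set.Finite.biUnion (Set.finite_mem_finset _) fun S _ => hfin S
    _ ≤ ∑ S ∈ h𝒮.toFinset, (F S).ncard := aux_ncard_biUnion_le F hfin _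
    _ ≤ ∑ _S ∈ h𝒮.toFinset, f (r, p) := by
        refine Finset.sum_le_sum fun S hS => ?_
        have h1 : (F S).ncard ≤ profCount G r S :=
          Set.ncard_image_le (Set.Finite.subset (Set.finite_range (rProfile G r S))
            (by rintro q ⟨⟨v, hv⟩, -⟩; exact ⟨v, hv.symm⟩))
        refine le_trans h1 (le_trans (hbound S) (hf r _ _ ?_))
        exact hguard.1 S (h𝒮.mem_toFinset.1 hS)
    _ = f (r, p) * 𝒮.ncard := by
        rw [Finset.sum_const, smul_eq_mul, mul_comm,
          Set.ncard_eq_toFinset_card 𝒮 h𝒮]
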